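/- Let g ∈ L²(ℝ), y ∈ ℝ, and define the translation (τ_y g)(t) = g(t - y). Then (W^M_ψ τ_y g)(a,b) = exp((iA/B) y(y-b)) (W^M_ψ (exp((iA/B)yt) g(t)))(a, b - y). -/

import Mathlib

open MeasureTheory Real Set
open scoped ComplexConjugate

/-- The LCT kernel K_M(t,ξ) = (2πiB)^{-1/2} exp((i/2)((A/B)t² - (2/B)ξt + (D/B)ξ²)). -/
noncomputable def lctKernel (A B D : ℝ) (t ξ : ℝ) : ℂ :=
  (2 * (Real.pi : ℂ) * Complex.I * (B : ℂ)) ^ (-(1/2 : ℂ)) *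
    Complex.exp ((Complex.I / 2) * ((A / B * t ^ 2 - 2 / B * ξ * t + D / B * ξ ^ 2 : ℝ) : ℂ))

/-- The linear canonical transform (B ≠ 0 case). -/
noncomputable def LCT (A B D : ℝ) (f : ℝ → ℂ) (ξ : ℝ) : ℂ :=
  ∫ t : ℝ, f t * lctKernel A B D t ξ

/-- The daughter wavelet ψ^M_{a,b}. -/
noncomputable def daughter (A B : ℝ) (ψ : ℝ → ℂ) (a b t : ℝ) : ℂ :=
  Complex.exp (Complex.I * ((-(A / (2 * B)) * ((t ^ 2 - b ^ 2) - a ^ 2 * (t - b) ^ 2) : ℝ) : ℂ)) *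
    (Real.sqrt a : ℂ) * ψ (a * (t - b))

/-- The linear canonical wavelet transform (W^M_ψ f)(a,b) = ⟨f, ψ^M_{a,b}⟩. -/
noncomputable def LCWT (A B : ℝ) (ψ f : ℝ → ℂ) (a b : ℝ) : ℂ :=
  ∫ t : ℝ, f t * conj (daughter A B ψ a b t)

/-- ψ is an admissible linear canonical wavelet with admissibility constant Cψ. -/
def IsALCW (A B D : ℝ) (ψ : ℝ → ℂ) (Cψ : ℝ) : Prop :=
  0 < Cψ ∧ ∀ ξ : ℝ, |ξ| = 1 →
    (∫ a in Set.Ioi (0 : ℝ), ‖LCT A B D ψ (ξ / a)‖ ^ 2 / a) = Cψ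

theorem LCWT_translation (A B C D : ℝ) (hM : A * D - B * C = 1) (hB : B ≠ 0)
    (ψ g : ℝ → ℂ) (hg : MemLp g 2 (volume : Measure ℝ)) (y : ℝ) :
    ∀ a : ℝ, 0 < a → ∀ b : ℝ,
      LCWT A B ψ (fun t => g (t - y)) a b =
        Complex.exp (Complex.I * ((A / B * (y * (y - b)) : ℝ) : ℂ)) *
          LCWT A B ψ (fun t => Complex.exp (Complex.I * ((A / B * y * t : ℝ) : ℂ)) * g t)
            a (b - y) := by
  intro a ha b
  unfold LCWT
  have hshift : (∫ t : ℝ, g (t - y) * conj (daughter A B ψ a b t))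
      = ∫ t : ℝ, g t * conj (daughter A B ψ a b (t + y)) := by
    rw [← MeasureTheory.integral_add_right_eq_self
      (fun t : ℝ => g (t - y) * conj (daughter A B ψ a b t)) y]
    simp
  rw [show (fun t => g (t - y)) = fun t : ℝ => g (t - y) from rfl]
  rw [hshift, ← MeasureTheory.integral_const_mul]
  congr 1
  funext t
  unfold daughter
  simp only [map_mul, ← Complex.exp_conj, Complex.conj_I, map_neg, Complex.conj_ofReal]
  have harg : a * (t + y - b) = a * (t - (b - y)) := by ring
  rw [harg]
  have hexp : Complex.exp (-Complex.I * ((-(A / (2 * B)) * (((t + y) ^ 2 - b ^ 2) - a ^ 2 * (t + y - b) ^ 2) : ℝ) : ℂ))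
      = Complex.exp (Complex.I * ((A / B * (y * (y - b)) : ℝ) : ℂ)) *
        Complex.exp (Complex.I * ((A / B * y * t : ℝ) : ℂ)) *
        Complex.exp (-Complex.I * ((-(A / (2 * B)) * ((t ^ 2 - (b - y) ^ 2) - a ^ 2 * (t - (b - y)) ^ 2) : ℝ) : ℂ)) := by
    rw [← Complex.exp_add, ← Complex.exp_add]
    congr 1
    push_cast
    field_simp
    ring
  rw [hexp]
  ring
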